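/- Let ℬ = {β, β*} be the roots of an integer quadratic Ax² + Bx + C with β irrational (β ∉ ℚ ∪ {∞}), and let N ≥ 0, k ≥ 1 with N + k > 2. Then the set of integer points (b_1, …, b_N, a_1, …, a_k) ∈ ℤ^{N+k} on the PCF variety V(ℬ)_{N,k} with |entries| > 2 in every coordinate has cardinality at most 2. -/

import Mathlib

/-- The matrix `D(x) = [[x, 1], [1, 0]]` over `ℤ`. -/
def DmZ (x : ℤ) : Matrix (Fin 2) (Fin 2) ℤ :=
  !![x, 1; 1, 0]

/-- The matrix `t = [[0, 1], [1, 0]]` over `ℤ`. -/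
def tmZ : Matrix (Fin 2) (Fin 2) ℤ :=
  !![0, 1; 1, 0]

/-- The ordered product `D(x 0) ⋯ D(x (n-1))`. -/
def DlistZ {n : ℕ} (x : Fin n → ℤ) : Matrix (Fin 2) (Fin 2) ℤ :=
  (List.ofFn fun i => DmZ (x i)).prod

/-- The matrix `E = D(b₁)⋯D(b_N) D(a₁)⋯D(a_k) t D(-b_N)⋯D(-b₁) t`. -/
def EmatZ (N k : ℕ) (b : Fin N → ℤ) (a : Fin k → ℤ) : Matrix (Fin 2) (Fin 2) ℤ :=
  DlistZ b * DlistZ a * tmZ * DlistZ (fun i : Fin N => -(b i.rev)) * tmZ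

open scoped NNReal

noncomputable section PCF

/-! ### Continued fraction values -/

/-- Value of a finite continued fraction with tail value `z`. -/
def cfF : List ℤ → ℂ → ℂ
  | [], z => z
  | a :: l, z => (a : ℂ) + (cfF l z)⁻¹

lemma cfF_nil (z : ℂ) : cfF [] z = z := rfl

lemma cfF_cons (a : ℤ) (l : List ℤ) (z : ℂ) : cfF (a :: l) z = (a : ℂ) + (cfF l z)⁻¹ := rfl

lemma cfF_append (l1 l2 : List ℤ) (z : ℂ) : cfF (l1 ++ l2) z = cfF l1 (cfF l2 z) := by
  induction l1 with
  | nil => rfl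
  | cons a l ih => simp [cfF_cons, ih]

lemma cfF_norm {l : List ℤ} {z : ℂ} (hl : ∀ x ∈ l, 3 ≤ |x|) (hz : 2 ≤ ‖z‖) :
    2 ≤ ‖cfF l z‖ ∧ (l ≠ [] → 5/2 ≤ ‖cfF l z‖) := by
  induction l with
  | nil => exact ⟨hz, fun h => absurd rfl h⟩
  | cons a l ih =>
    have ha : (3:ℝ) ≤ ‖(a : ℂ)‖ := by
      rw [Complex.norm_intCast]
      exact_mod_cast hl a List.mem_cons_self
    have h2 : 2 ≤ ‖cfF l z‖ := (ih (fun x hx => hl x (List.mem_cons_of_mem a hx))).1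
    have hne : cfF l z ≠ 0 := by
      intro h; rw [h] at h2; norm_num at h2
    have hinv : ‖(cfF l z)⁻¹‖ ≤ 1/2 := by
      rw [norm_inv]
      rw [inv_le_comm₀ (by linarith) (by norm_num)] at *
      · linarith
    have : 5/2 ≤ ‖cfF (a :: l) z‖ := by
      rw [cfF_cons]
      calc (5/2 : ℝ) = 3 - 1/2 := by norm_num
      _ ≤ ‖(a:ℂ)‖ - ‖(cfF l z)⁻¹‖ := by linarith
      _ ≤ ‖(a:ℂ) + (cfF l z)⁻¹‖ := by
          have h3 : ‖(a:ℂ)‖ ≤ ‖(a:ℂ) + (cfF l z)⁻¹‖ + ‖(cfF l z)⁻¹‖ := by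
            simpa using norm_sub_le ((a:ℂ) + (cfF l z)⁻¹) ((cfF l z)⁻¹)
          linarith
    exact ⟨by linarith, fun _ => this⟩

lemma cfF_ne_zero {l : List ℤ} {z : ℂ} (hl : ∀ x ∈ l, 3 ≤ |x|) (hz : 2 ≤ ‖z‖) :
    cfF l z ≠ 0 := by
  intro h
  have := (cfF_norm hl hz).1
  rw [h] at this; norm_num at this

lemma cfF_norm52 {l : List ℤ} {z : ℂ} (hl : ∀ x ∈ l, 3 ≤ |x|) (hz : 5/2 ≤ ‖z‖) :
    5/2 ≤ ‖cfF l z‖ := by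
  cases l with
  | nil => exact hz
  | cons a l => exact (cfF_norm hl (by linarith)).2 (by simp)

/-- Uniqueness of continued fraction digits. -/
lemma cfF_inj : ∀ (L L' : List ℤ) (z z' : ℂ), L.length = L'.length →
    (∀ x ∈ L, 3 ≤ |x|) → (∀ x ∈ L', 3 ≤ |x|) → 5/2 ≤ ‖z‖ → 5/2 ≤ ‖z'‖ →
    cfF L z = cfF L' z' → L = L' ∧ z = z' := by
  intro L
  induction L with
  | nil =>
    intro L' z z' hlen _ _ _ _ heq
    cases L' with
    | nil => exact ⟨rfl, heq⟩
    | cons a l => simp at hlen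
  | cons c M ih =>
    intro L' z z' hlen hL hL' hz hz' heq
    cases L' with
    | nil => simp at hlen
    | cons c' M' =>
      have hM : ∀ x ∈ M, 3 ≤ |x| := fun x hx => hL x (List.mem_cons_of_mem c hx)
      have hM' : ∀ x ∈ M', 3 ≤ |x| := fun x hx => hL' x (List.mem_cons_of_mem c' hx)
      have hw : 5/2 ≤ ‖cfF M z‖ := cfF_norm52 hM hz
      have hw' : 5/2 ≤ ‖cfF M' z'‖ := cfF_norm52 hM' hz'
      have hwne : cfF M z ≠ 0 := by intro h; rw [h] at hw; norm_num at hw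
      have hwne' : cfF M' z' ≠ 0 := by intro h; rw [h] at hw'; norm_num at hw'
      have hinv : ‖(cfF M z)⁻¹‖ ≤ 2/5 := by
        rw [norm_inv]; rw [inv_le_comm₀ (by linarith) (by norm_num)]; linarith
      have hinv' : ‖(cfF M' z')⁻¹‖ ≤ 2/5 := by
        rw [norm_inv]; rw [inv_le_comm₀ (by linarith) (by norm_num)]; linarith
      rw [cfF_cons, cfF_cons] at heq
      have hcc : ((c - c' : ℤ) : ℂ) = (cfF M' z')⁻¹ - (cfF M z)⁻¹ := by
        push_cast
        linear_combination heq
      have : |(c - c' : ℤ)| < 1 := by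
        have h1 : ‖((c - c' : ℤ) : ℂ)‖ < 1 := by
          rw [hcc]
          calc ‖(cfF M' z')⁻¹ - (cfF M z)⁻¹‖ ≤ ‖(cfF M' z')⁻¹‖ + ‖(cfF M z)⁻¹‖ :=
            norm_sub_le _ _
          _ < 1 := by linarith
        rw [Complex.norm_intCast] at h1
        exact_mod_cast h1
      have hc : c = c' := by have := abs_lt.mp this; omega
      subst hc
      have heq2 : cfF M z = cfF M' z' := by
        have : (cfF M z)⁻¹ = (cfF M' z')⁻¹ := by
          field_simp at heq ⊢
          linear_combination heq
        exact inv_injective this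
      obtain ⟨h1, h2⟩ := ih M' z z' (by simpa using hlen) hM hM' hz hz' heq2
      exact ⟨by rw [h1], h2⟩

/-! ### Matrix identities over ℤ -/

lemma DlistZ_zero (x : Fin 0 → ℤ) : DlistZ x = 1 := by
  simp [DlistZ]

lemma DlistZ_succ {n : ℕ} (x : Fin (n+1) → ℤ) :
    DlistZ x = DmZ (x 0) * DlistZ (fun i => x i.succ) := by
  rw [DlistZ, List.ofFn_succ, List.prod_cons]; rfl

lemma DlistZ_succ' {n : ℕ} (x : Fin (n+1) → ℤ) :
    DlistZ x = DlistZ (fun i : Fin n => x i.castSucc) * DmZ (x (Fin.last n)) := by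
  rw [DlistZ, List.ofFn_succ', List.prod_concat]; rfl

lemma tmZ_mul_tmZ : tmZ * tmZ = 1 := by
  rw [show (1 : Matrix (Fin 2) (Fin 2) ℤ) = !![1,0;0,1] from Matrix.one_fin_two]
  simp [tmZ, Matrix.mul_fin_two]

lemma DmZ_inv (x : ℤ) : DmZ x * (tmZ * DmZ (-x) * tmZ) = 1 := by
  rw [show (1 : Matrix (Fin 2) (Fin 2) ℤ) = !![1,0;0,1] from Matrix.one_fin_two]
  simp [tmZ, DmZ, Matrix.mul_fin_two]

lemma tconj_mul (X Y : Matrix (Fin 2) (Fin 2) ℤ) :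
    (tmZ * X * tmZ) * (tmZ * Y * tmZ) = tmZ * (X * Y) * tmZ := by
  simp only [mul_assoc]
  rw [← mul_assoc tmZ tmZ (Y * tmZ), tmZ_mul_tmZ, one_mul]

lemma DlistZ_inv : ∀ {n : ℕ} (b : Fin n → ℤ),
    DlistZ b * (tmZ * DlistZ (fun i => -(b i.rev)) * tmZ) = 1 := by
  intro n
  induction n with
  | zero => intro b; rw [DlistZ_zero, DlistZ_zero]; rw [one_mul, mul_one, tmZ_mul_tmZ]
  | succ n ih =>
    intro b
    set b' := fun j : Fin n => b j.succ with hb'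
    have hfun : (fun i : Fin n => -(b (Fin.castSucc i).rev)) = fun i : Fin n => -(b' i.rev) := by
      funext i
      rw [hb']
      simp only [Fin.rev_castSucc]
    have h1 : DlistZ (fun i : Fin (n+1) => -(b i.rev))
        = DlistZ (fun i : Fin n => -(b' i.rev)) * DmZ (-(b 0)) := by
      rw [DlistZ_succ' (fun i : Fin (n+1) => -(b i.rev))]
      rw [show (fun i : Fin n => -(b (Fin.castSucc i).rev)) = (fun i : Fin n => -(b' i.rev))
        from hfun]
      rw [Fin.rev_last]
    rw [DlistZ_succ b, h1, ← tconj_mul, ← hb']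
    calc DmZ (b 0) * DlistZ b'
          * ((tmZ * DlistZ (fun i : Fin n => -(b' i.rev)) * tmZ) * (tmZ * DmZ (-(b 0)) * tmZ))
        = DmZ (b 0) * ((DlistZ b' * (tmZ * DlistZ (fun i : Fin n => -(b' i.rev)) * tmZ))
            * (tmZ * DmZ (-(b 0)) * tmZ)) := by
          simp only [mul_assoc]
      _ = 1 := by rw [ih b', one_mul, DmZ_inv]

lemma EmatZ_mul (N k : ℕ) (b : Fin N → ℤ) (a : Fin k → ℤ) :
    EmatZ N k b a * DlistZ b = DlistZ b * DlistZ a := by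
  have h := DlistZ_inv b
  have h2 : (tmZ * DlistZ (fun i : Fin N => -(b i.rev)) * tmZ) * DlistZ b = 1 :=
    mul_eq_one_comm.mp h
  calc EmatZ N k b a * DlistZ b
      = DlistZ b * DlistZ a * ((tmZ * DlistZ (fun i : Fin N => -(b i.rev)) * tmZ) * DlistZ b) := by
        rw [EmatZ]; simp only [mul_assoc]
    _ = DlistZ b * DlistZ a := by rw [h2, mul_one]

/-! ### Matrices over ℂ and the eigenvector relation -/

def DmC (x : ℂ) : Matrix (Fin 2) (Fin 2) ℂ := !![x, 1; 1, 0]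

def MlistC (l : List ℤ) : Matrix (Fin 2) (Fin 2) ℂ := (l.map fun a : ℤ => DmC (a : ℂ)).prod

lemma MlistC_nil : MlistC [] = 1 := by simp [MlistC]

lemma MlistC_cons (a : ℤ) (l : List ℤ) : MlistC (a :: l) = DmC (a : ℂ) * MlistC l := by
  simp [MlistC]

lemma map_DmZ (c : ℤ) : (Int.castRingHom ℂ).mapMatrix (DmZ c) = DmC (c : ℂ) := by
  ext i j
  fin_cases i <;> fin_cases j <;>
    simp [DmZ, DmC, RingHom.mapMatrix_apply, Matrix.map_apply]

lemma map_DlistZ {n : ℕ} (x : Fin n → ℤ) :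
    (Int.castRingHom ℂ).mapMatrix (DlistZ x) = MlistC (List.ofFn x) := by
  rw [DlistZ, MlistC, map_list_prod]
  congr 1
  simp only [List.map_ofFn]
  congr 1
  funext i
  exact map_DmZ (x i)

lemma mulVec_MlistC : ∀ (l : List ℤ), (∀ x ∈ l, 3 ≤ |x|) → ∀ (z : ℂ), 2 ≤ ‖z‖ →
    ∃ δ : ℂ, δ ≠ 0 ∧ (MlistC l).mulVec ![z, 1] = δ • ![cfF l z, 1] := by
  intro l
  induction l with
  | nil =>
    intro _ z _
    refine ⟨1, one_ne_zero, ?_⟩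
    rw [MlistC_nil, cfF_nil, Matrix.one_mulVec, one_smul]
  | cons a l ih =>
    intro hl z hz
    obtain ⟨δ, hδ, hvec⟩ := ih (fun x hx => hl x (List.mem_cons_of_mem a hx)) z hz
    set w := cfF l z with hwdef
    have hwne : w ≠ 0 := cfF_ne_zero (fun x hx => hl x (List.mem_cons_of_mem a hx)) hz
    refine ⟨δ * w, mul_ne_zero hδ hwne, ?_⟩
    rw [MlistC_cons, ← Matrix.mulVec_mulVec, hvec, Matrix.mulVec_smul]
    have hDw : (DmC (a:ℂ)).mulVec ![w, 1] = ![(a:ℂ) * w + 1, w] := by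
      funext i
      fin_cases i <;>
        simp [DmC, Matrix.mulVec, dotProduct, Fin.sum_univ_two]
    rw [hDw, cfF_cons, ← hwdef]
    funext i
    fin_cases i <;> simp [Matrix.smul_cons] <;> field_simp <;> ring

/-! ### Existence of the attracting fixed point -/

def cfDom : Set ℂ := {z | 2 ≤ ‖z‖}

lemma isClosed_SSet : IsClosed cfDom := isClosed_le continuous_const continuous_norm

instance : CompleteSpace cfDom := isClosed_SSet.completeSpace_coe

instance : Nonempty cfDom := ⟨⟨2, by simp [cfDom]⟩⟩

def cfStep (a : ℤ) (ha : 3 ≤ |a|) (z : cfDom) : cfDom :=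
  ⟨(a : ℂ) + (z : ℂ)⁻¹, by
    have h := (cfF_norm (l := [a]) (by simpa using ha) z.2).2 (by simp)
    have : cfF [a] (z : ℂ) = (a : ℂ) + (z : ℂ)⁻¹ := by rw [cfF_cons, cfF_nil]
    rw [this] at h
    simp only [cfDom, Set.mem_setOf_eq]
    linarith⟩

lemma cfStep_lip (a : ℤ) (ha : 3 ≤ |a|) : LipschitzWith (1/4) (cfStep a ha) := by
  apply LipschitzWith.of_dist_le_mul
  intro x y
  have hx : (2:ℝ) ≤ ‖(x : ℂ)‖ := x.2
  have hy : (2:ℝ) ≤ ‖(y : ℂ)‖ := y.2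
  have hxne : (x : ℂ) ≠ 0 := by intro h; rw [h] at hx; norm_num at hx
  have hyne : (y : ℂ) ≠ 0 := by intro h; rw [h] at hy; norm_num at hy
  have hdist : dist (cfStep a ha x) (cfStep a ha y) = ‖(x:ℂ)⁻¹ - (y:ℂ)⁻¹‖ := by
    rw [Subtype.dist_eq, cfStep, cfStep, dist_eq_norm]
    congr 1
    ring
  rw [hdist, Subtype.dist_eq, dist_eq_norm]
  have hsub : (x:ℂ)⁻¹ - (y:ℂ)⁻¹ = ((y:ℂ) - (x:ℂ)) / ((x:ℂ) * (y:ℂ)) := by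
    field_simp
  rw [hsub, norm_div, norm_mul, norm_sub_rev]
  have h4 : (4:ℝ) ≤ ‖(x:ℂ)‖ * ‖(y:ℂ)‖ := by nlinarith
  have hnn : (0:ℝ) ≤ ‖(x:ℂ) - (y:ℂ)‖ := norm_nonneg _
  calc ‖(x:ℂ) - (y:ℂ)‖ / (‖(x:ℂ)‖ * ‖(y:ℂ)‖) ≤ ‖(x:ℂ) - (y:ℂ)‖ / 4 := by
        apply div_le_div_of_nonneg_left hnn (by norm_num) h4
    _ = ((1/4 : ℝ≥0) : ℝ) * ‖(x:ℂ) - (y:ℂ)‖ := by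
        push_cast
        ring

def cfComp : List {a : ℤ // 3 ≤ |a|} → cfDom → cfDom
  | [] => id
  | a :: l => cfStep a.1 a.2 ∘ cfComp l

lemma cfComp_lip : ∀ l : List {a : ℤ // 3 ≤ |a|}, LipschitzWith 1 (cfComp l) := by
  intro l
  induction l with
  | nil => exact LipschitzWith.id
  | cons a l ih =>
    have := (cfStep_lip a.1 a.2).comp ih
    exact this.weaken (by rw [← NNReal.coe_le_coe]; norm_num)

lemma cfComp_val : ∀ (l : List {a : ℤ // 3 ≤ |a|}) (z : cfDom),
    (cfComp l z : ℂ) = cfF (l.map Subtype.val) (z : ℂ) := by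
  intro l
  induction l with
  | nil => intro z; rfl
  | cons a l ih =>
    intro z
    show ((cfStep a.1 a.2 (cfComp l z) : cfDom) : ℂ) = _
    rw [List.map_cons, cfF_cons, ← ih z]
    rfl

lemma exists_fixed {k : ℕ} (hk : 1 ≤ k) (a : Fin k → ℤ) (ha : ∀ i, 3 ≤ |a i|) :
    ∃ y : ℂ, 5/2 ≤ ‖y‖ ∧ cfF (List.ofFn a) y = y := by
  obtain ⟨k', rfl⟩ : ∃ k', k = k' + 1 := ⟨k - 1, by omega⟩
  set l : List {x : ℤ // 3 ≤ |x|} := List.ofFn (fun i => ⟨a i, ha i⟩) with hl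
  have hlmap : l.map Subtype.val = List.ofFn a := by rw [hl, List.map_ofFn]; rfl
  have hlip : LipschitzWith (1/4) (cfComp l) := by
    have hcons : l = ⟨a 0, ha 0⟩ :: List.ofFn (fun i : Fin k' => ⟨a i.succ, ha i.succ⟩) := by
      rw [hl, List.ofFn_succ]
    rw [hcons]
    have := (cfStep_lip (a 0) (ha 0)).comp
      (cfComp_lip (List.ofFn (fun i : Fin k' => ⟨a i.succ, ha i.succ⟩)))
    exact this.weaken (by norm_num)
  have hc : ContractingWith (1/4) (cfComp l) := ⟨by rw [← NNReal.coe_lt_coe]; norm_num, hlip⟩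
  set y : cfDom := hc.fixedPoint with hy
  have hfix : cfComp l y = y := hc.fixedPoint_isFixedPt
  have hfixv : cfF (List.ofFn a) (y : ℂ) = (y : ℂ) := by
    rw [← hlmap, ← cfComp_val, hfix]
  refine ⟨(y : ℂ), ?_, hfixv⟩
  have h2 : (2:ℝ) ≤ ‖(y:ℂ)‖ := y.2
  have hne : (List.ofFn a : List ℤ) ≠ [] := by simp
  have hmem : ∀ x ∈ List.ofFn a, 3 ≤ |x| := by
    intro x hx
    obtain ⟨i, rfl⟩ := List.mem_ofFn.mp hx
    exact ha i
  have := (cfF_norm hmem h2).2 hne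
  rw [hfixv] at this
  exact this

/-! ### The value of a point on the variety is a root -/

lemma value_mem (A B C : ℤ) (hA : A ≠ 0) (β βs : ℂ)
    (hroots : ∀ x : ℂ, (A : ℂ) * x ^ 2 + (B : ℂ) * x + (C : ℂ)
      = (A : ℂ) * (x - β) * (x - βs))
    {N k : ℕ} (b : Fin N → ℤ) (a : Fin k → ℤ)
    (hb : ∀ i, 3 ≤ |b i|) (ha : ∀ i, 3 ≤ |a i|)
    (u : ℂ) (hu : u ≠ 0)
    (h10 : ((EmatZ N k b a) 1 0 : ℂ) = u * A)
    (hBB : (((EmatZ N k b a) 1 1 - (EmatZ N k b a) 0 0 : ℤ) : ℂ) = u * B)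
    (hCC : ((-(EmatZ N k b a) 0 1 : ℤ) : ℂ) = u * C)
    (y : ℂ) (hy : 2 ≤ ‖y‖) (hfix : cfF (List.ofFn a) y = y) :
    cfF (List.ofFn b ++ List.ofFn a) y = β ∨ cfF (List.ofFn b ++ List.ofFn a) y = βs := by
  have hmb : ∀ x ∈ List.ofFn b, 3 ≤ |x| := by
    intro x hx; obtain ⟨i, rfl⟩ := List.mem_ofFn.mp hx; exact hb i
  have hma : ∀ x ∈ List.ofFn a, 3 ≤ |x| := by
    intro x hx; obtain ⟨i, rfl⟩ := List.mem_ofFn.mp hx; exact ha i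
  set T : ℂ := cfF (List.ofFn b) y with hT
  have hTval : cfF (List.ofFn b ++ List.ofFn a) y = T := by
    rw [cfF_append, hfix]
  rw [hTval]
  -- matrix relation over ℂ
  have hEZ := EmatZ_mul N k b a
  have hEC : (Int.castRingHom ℂ).mapMatrix (EmatZ N k b a) * MlistC (List.ofFn b)
      = MlistC (List.ofFn b) * MlistC (List.ofFn a) := by
    rw [← map_DlistZ, ← map_DlistZ, ← map_mul, ← map_mul, hEZ]
  obtain ⟨δ, hδ, hvecA⟩ := mulVec_MlistC (List.ofFn a) hma y hy
  obtain ⟨ε, hε, hvecB⟩ := mulVec_MlistC (List.ofFn b) hmb y hy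
  rw [hfix] at hvecA
  set EC := (Int.castRingHom ℂ).mapMatrix (EmatZ N k b a) with hECdef
  have hkey : EC.mulVec ![T, 1] = δ • ![T, 1] := by
    have h1 : EC.mulVec (ε • ![T, 1]) = ε • (δ • ![T, 1]) := by
      rw [← hvecB, Matrix.mulVec_mulVec, hEC, ← Matrix.mulVec_mulVec, hvecA,
        Matrix.mulVec_smul, hvecB, smul_comm]
    rw [Matrix.mulVec_smul] at h1
    have h2 := congrArg (fun v : Fin 2 → ℂ => ε⁻¹ • v) h1
    simpa only [inv_smul_smul₀ hε] using h2
  have comp0 : ((EmatZ N k b a 0 0 : ℤ) : ℂ) * T + ((EmatZ N k b a 0 1 : ℤ) : ℂ) = δ * T := by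
    have := congrFun hkey 0
    simpa [hECdef, RingHom.mapMatrix_apply, Matrix.map_apply, Matrix.mulVec,
      dotProduct, Fin.sum_univ_two] using this
  have comp1 : ((EmatZ N k b a 1 0 : ℤ) : ℂ) * T + ((EmatZ N k b a 1 1 : ℤ) : ℂ) = δ := by
    have := congrFun hkey 1
    simpa [hECdef, RingHom.mapMatrix_apply, Matrix.map_apply, Matrix.mulVec,
      dotProduct, Fin.sum_univ_two] using this
  have hBB' : ((EmatZ N k b a 1 1 : ℤ) : ℂ) - ((EmatZ N k b a 0 0 : ℤ) : ℂ) = u * B := by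
    push_cast at hBB
    exact hBB
  have hCC' : -((EmatZ N k b a 0 1 : ℤ) : ℂ) = u * C := by
    push_cast at hCC
    exact hCC
  have hquad : u * ((A : ℂ) * T ^ 2 + (B : ℂ) * T + (C : ℂ)) = 0 := by
    linear_combination T * comp1 - comp0 - T ^ 2 * h10 - T * hBB' - hCC'
  have hquad2 : (A : ℂ) * (T - β) * (T - βs) = 0 := by
    rw [← hroots T]
    exact (mul_eq_zero.mp hquad).resolve_left hu
  have hAne : (A : ℂ) ≠ 0 := Int.cast_ne_zero.mpr hA
  rcases mul_eq_zero.mp hquad2 with h | h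
  · rcases mul_eq_zero.mp h with h' | h'
    · exact absurd h' hAne
    · left
      exact sub_eq_zero.mp h'
  · right
    exact sub_eq_zero.mp h

end PCF

/-- Let `ℬ = {β, β*}` be the roots of an integer quadratic `Ax² + Bx + C` with
`β` irrational, and `N ≥ 0`, `k ≥ 1`, `N + k > 2`.  The set of integer points
of the PCF variety `V(ℬ)_{N,k}` (points whose associated quadratic
`E₂₁x² + (E₂₂ - E₁₁)x - E₁₂` is a nonzero multiple of `Ax² + Bx + C`) all of
whose coordinates have absolute value `> 2` has cardinality at most `2`. -/
theorem stmt19 (A B C : ℤ) (hA : A ≠ 0) (β βs : ℂ)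
    (hroots : ∀ x : ℂ, (A : ℂ) * x ^ 2 + (B : ℂ) * x + (C : ℂ)
      = (A : ℂ) * (x - β) * (x - βs))
    (hβ : ∀ q : ℚ, (q : ℂ) ≠ β)
    (N k : ℕ) (hk : 1 ≤ k) (hNk : 2 < N + k) :
    ∃ p₁ p₂ : (Fin N → ℤ) × (Fin k → ℤ),
      {p : (Fin N → ℤ) × (Fin k → ℤ) |
        (∃ u : ℂ, u ≠ 0 ∧
          ((EmatZ N k p.1 p.2) 1 0 : ℂ) = u * A ∧
          (((EmatZ N k p.1 p.2) 1 1 - (EmatZ N k p.1 p.2) 0 0 : ℤ) : ℂ) = u * B ∧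
          ((-(EmatZ N k p.1 p.2) 0 1 : ℤ) : ℂ) = u * C) ∧
        (∀ i, 2 < |p.1 i|) ∧ (∀ j, 2 < |p.2 j|)} ⊆ {p₁, p₂} := by
  classical
  set V : Set ((Fin N → ℤ) × (Fin k → ℤ)) := {p : (Fin N → ℤ) × (Fin k → ℤ) |
        (∃ u : ℂ, u ≠ 0 ∧
          ((EmatZ N k p.1 p.2) 1 0 : ℂ) = u * A ∧
          (((EmatZ N k p.1 p.2) 1 1 - (EmatZ N k p.1 p.2) 0 0 : ℤ) : ℂ) = u * B ∧
          ((-(EmatZ N k p.1 p.2) 0 1 : ℤ) : ℂ) = u * C) ∧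
        (∀ i, 2 < |p.1 i|) ∧ (∀ j, 2 < |p.2 j|)} with hV
  have habs : ∀ n : ℤ, 2 < |n| → 3 ≤ |n| := fun n h => by omega
  have hentries : ∀ p : (Fin N → ℤ) × (Fin k → ℤ), p ∈ V →
      ∀ x ∈ List.ofFn p.1 ++ List.ofFn p.2, 3 ≤ |x| := by
    intro p hp x hx
    obtain ⟨_, hb2, ha2⟩ := hp
    rcases List.mem_append.mp hx with h | h
    · obtain ⟨i, rfl⟩ := List.mem_ofFn.mp h
      exact habs _ (hb2 i)
    · obtain ⟨j, rfl⟩ := List.mem_ofFn.mp h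
      exact habs _ (ha2 j)
  have hchoice : ∀ p : (Fin N → ℤ) × (Fin k → ℤ), p ∈ V → ∃ y : ℂ,
      (5/2 ≤ ‖y‖) ∧
      (cfF (List.ofFn p.1 ++ List.ofFn p.2) y = β ∨
        cfF (List.ofFn p.1 ++ List.ofFn p.2) y = βs) := by
    intro p hp
    obtain ⟨⟨u, hu, h10, hBB, hCC⟩, hb2, ha2⟩ := hp
    have hb3 : ∀ i, 3 ≤ |p.1 i| := fun i => habs _ (hb2 i)
    have ha3 : ∀ j, 3 ≤ |p.2 j| := fun j => habs _ (ha2 j)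
    obtain ⟨y, hy52, hyfix⟩ := exists_fixed hk p.2 ha3
    exact ⟨y, hy52,
      value_mem A B C hA β βs hroots p.1 p.2 hb3 ha3 u hu h10 hBB hCC y (by linarith) hyfix⟩
  choose! Y hYnorm hYroot using hchoice
  have hinj : ∀ p, p ∈ V → ∀ q, q ∈ V →
      cfF (List.ofFn p.1 ++ List.ofFn p.2) (Y p) = cfF (List.ofFn q.1 ++ List.ofFn q.2) (Y q) →
      p = q := by
    intro p hp q hq heq
    obtain ⟨h1, _⟩ := cfF_inj (List.ofFn p.1 ++ List.ofFn p.2)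
      (List.ofFn q.1 ++ List.ofFn q.2) (Y p) (Y q) (by simp)
      (hentries p hp) (hentries q hq) (hYnorm p hp) (hYnorm q hq) heq
    obtain ⟨e1, e2⟩ := List.append_inj h1 (by simp)
    exact Prod.ext (List.ofFn_injective e1) (List.ofFn_injective e2)
  obtain ⟨p₁, hp₁⟩ : ∃ p₁, ∀ p ∈ V,
      cfF (List.ofFn p.1 ++ List.ofFn p.2) (Y p) = β → p = p₁ := by
    by_cases h : ∃ p ∈ V, cfF (List.ofFn p.1 ++ List.ofFn p.2) (Y p) = β
    · obtain ⟨q, hq, hqβ⟩ := h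
      exact ⟨q, fun p hp hpβ => hinj p hp q hq (by rw [hpβ, hqβ])⟩
    · exact ⟨⟨fun _ => 0, fun _ => 0⟩, fun p hp hpβ => absurd ⟨p, hp, hpβ⟩ h⟩
  obtain ⟨p₂, hp₂⟩ : ∃ p₂, ∀ p ∈ V,
      cfF (List.ofFn p.1 ++ List.ofFn p.2) (Y p) = βs → p = p₂ := by
    by_cases h : ∃ p ∈ V, cfF (List.ofFn p.1 ++ List.ofFn p.2) (Y p) = βs
    · obtain ⟨q, hq, hqβ⟩ := h
      exact ⟨q, fun p hp hpβ => hinj p hp q hq (by rw [hpβ, hqβ])⟩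
    · exact ⟨⟨fun _ => 0, fun _ => 0⟩, fun p hp hpβ => absurd ⟨p, hp, hpβ⟩ h⟩
  refine ⟨p₁, p₂, fun p hp => ?_⟩
  simp only [Set.mem_insert_iff, Set.mem_singleton_iff]
  rcases hYroot p hp with h | h
  · left; exact hp₁ p hp h
  · right; exact hp₂ p hp h
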